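/- Let a, b ∈ ℝ³ be linearly independent, p > 2, α = (p+√(p²−4))/2, and v_n = u_{n−1}(p)·a + u_n(p)·b where u_n(p) are the normalized Chebyshev polynomials of the second kind (u_{−2}=−1, u_{−1}=0, u_{n+1}=p·u_n − u_{n−1}). Then v_n/‖v_n‖ converges as n → ∞ to (a + α·b)/‖a + α·b‖. -/

import Mathlib

theorem chebyshev_vector_limit (a b : EuclideanSpace ℝ (Fin 3))
    (hab : LinearIndependent ℝ ![a, b]) (p : ℝ) (hp : 2 < p) (u : ℤ → ℝ)
    (hu2 : u (-2) = -1) (hu1 : u (-1) = 0)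
    (hrec : ∀ n : ℤ, -1 ≤ n → u (n + 1) = p * u n - u (n - 1)) :
    Filter.Tendsto
      (fun n : ℕ => ‖u ((n : ℤ) - 1) • a + u (n : ℤ) • b‖⁻¹ •
        (u ((n : ℤ) - 1) • a + u (n : ℤ) • b))
      Filter.atTop
      (nhds (‖a + ((p + Real.sqrt (p ^ 2 - 4)) / 2) • b‖⁻¹ •
        (a + ((p + Real.sqrt (p ^ 2 - 4)) / 2) • b))) := by
  set s := Real.sqrt (p ^ 2 - 4) with hs
  have hp4 : 0 < p ^ 2 - 4 := by nlinarith
  have hs2 : s ^ 2 = p ^ 2 - 4 := Real.sq_sqrt hp4.le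
  have hspos : 0 < s := Real.sqrt_pos.mpr hp4
  clear_value s
  have hsne : s ≠ 0 := hspos.ne'
  set α := (p + s) / 2 with hα
  set β := (p - s) / 2 with hβ
  clear_value α β
  have hsp : s < p := by nlinarith
  have hβpos : 0 < β := by rw [hβ]; linarith
  have hαβ : α * β = 1 := by rw [hα, hβ]; nlinarith
  have hβα : β < α := by rw [hα, hβ]; linarith
  have hαpos : 0 < α := lt_trans hβpos hβα
  have hα1 : 1 < α := by nlinarith
  have hβ1 : β < 1 := by nlinarith
  have hαmβ : α - β = s := by rw [hα, hβ]; ring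
  -- closed form for u
  have key : ∀ n : ℕ, u ((n : ℤ) - 1) = (α ^ n - β ^ n) / s ∧
      u (n : ℤ) = (α ^ (n + 1) - β ^ (n + 1)) / s := by
    intro n
    induction n with
    | zero =>
      constructor
      · norm_num [hu1]
      · have h0 := hrec (-1) le_rfl
        norm_num at h0 ⊢
        rw [h0, hu1, hu2, hαmβ]
        field_simp
        norm_num
    | succ n ih =>
      have hc1 : ((n + 1 : ℕ) : ℤ) - 1 = (n : ℤ) := by push_cast; ring
      have hc2 : ((n + 1 : ℕ) : ℤ) = (n : ℤ) + 1 := by push_cast; ring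
      refine ⟨by rw [hc1]; exact ih.2, ?_⟩
      have h := hrec n (by omega)
      rw [hc2, h, ih.1, ih.2]
      have hα2 : α ^ 2 = p * α - 1 := by rw [hα]; nlinarith
      have hβ2 : β ^ 2 = p * β - 1 := by rw [hβ]; nlinarith
      have eα : α ^ (n + 1 + 1) = p * α ^ (n + 1) - α ^ n := by
        have h' : α ^ (n + 1 + 1) = α ^ n * α ^ 2 := by ring
        rw [h', hα2]; ring
      have eβ : β ^ (n + 1 + 1) = p * β ^ (n + 1) - β ^ n := by
        have h' : β ^ (n + 1 + 1) = β ^ n * β ^ 2 := by ring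
        rw [h', hβ2]; ring
      rw [eα, eβ]; ring
  set q : ℝ := β ^ 2 with hq
  clear_value q
  have hq0 : 0 ≤ q := hq ▸ sq_nonneg β
  have hq1 : q < 1 := by nlinarith
  -- pointwise rescaling
  have hrescale : ∀ n : ℕ,
      ‖u ((n : ℤ) - 1) • a + u (n : ℤ) • b‖⁻¹ • (u ((n : ℤ) - 1) • a + u (n : ℤ) • b)
        = ‖(1 - q ^ n) • a + (α - β * q ^ n) • b‖⁻¹ •
          ((1 - q ^ n) • a + (α - β * q ^ n) • b) := by
    intro n
    obtain ⟨h1, h2⟩ := key n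
    have hβn : (0 : ℝ) < s * β ^ n := by positivity
    have hA : α ^ n * β ^ n = 1 := by rw [← mul_pow, hαβ, one_pow]
    have hB : q ^ n = β ^ n * β ^ n := by rw [hq, sq, mul_pow]
    have e1 : (1 - q ^ n) = (s * β ^ n) * u ((n : ℤ) - 1) := by
      rw [h1, hB]
      field_simp
      linear_combination (-1) * hA
    have e2 : (α - β * q ^ n) = (s * β ^ n) * u (n : ℤ) := by
      rw [h2, hB]
      field_simp
      linear_combination (-α) * hA
    rw [e1, e2]
    set c := s * β ^ n with hc
    set x := u ((n : ℤ) - 1) • a + u (n : ℤ) • b with hx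
    have hcx : (c * u ((n : ℤ) - 1)) • a + (c * u (n : ℤ)) • b = c • x := by
      rw [hx, smul_add, smul_smul, smul_smul]
    rw [hcx, norm_smul, Real.norm_eq_abs, abs_of_pos hβn, mul_inv, smul_smul,
      show c⁻¹ * ‖x‖⁻¹ * c = ‖x‖⁻¹ * (c⁻¹ * c) by ring, inv_mul_cancel₀ hβn.ne', mul_one]
  -- limit vector nonzero
  have hL : a + α • b ≠ 0 := by
    intro h
    have := (LinearIndependent.pair_iff.mp hab 1 α (by simpa using h)).1
    norm_num at this
  -- convergence
  have hqt : Filter.Tendsto (fun n : ℕ => q ^ n) Filter.atTop (nhds 0) :=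
    tendsto_pow_atTop_nhds_zero_of_lt_one hq0 hq1
  have hw : Filter.Tendsto (fun n : ℕ => (1 - q ^ n) • a + (α - β * q ^ n) • b)
      Filter.atTop (nhds (a + α • b)) := by
    have h1 : Filter.Tendsto (fun n : ℕ => (1 : ℝ) - q ^ n) Filter.atTop (nhds 1) := by
      simpa using tendsto_const_nhds.sub hqt
    have h2 : Filter.Tendsto (fun n : ℕ => α - β * q ^ n) Filter.atTop (nhds α) := by
      simpa using tendsto_const_nhds.sub (hqt.const_mul β)
    have h3 := (h1.smul_const a).add (h2.smul_const b)
    rw [one_smul] at h3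
    exact h3
  have hwn : Filter.Tendsto (fun n : ℕ => ‖(1 - q ^ n) • a + (α - β * q ^ n) • b‖⁻¹)
      Filter.atTop (nhds ‖a + α • b‖⁻¹) :=
    (hw.norm).inv₀ (norm_ne_zero_iff.mpr hL)
  exact Filter.Tendsto.congr (fun n => (hrescale n).symm) (hwn.smul hw)
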